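/- Let μ be a locally finite Borel measure on ℝ² such that for every closed half-plane H (in every direction) the restriction μ|H splits as a product n_H × λ¹ in coordinates adapted to H, where λ¹ is one-dimensional Lebesgue measure. Then μ = c·λ² for some constant c ≥ 0. -/

import Mathlib

open MeasureTheory Real ENNReal

/-- Rotation of the plane by angle `θ`. -/
noncomputable def planeRot (θ : ℝ) : ℝ × ℝ → ℝ × ℝ :=
  fun p => (p.1 * Real.cos θ - p.2 * Real.sin θ, p.1 * Real.sin θ + p.2 * Real.cos θ)

/-- From a half-plane splitting hypothesis, extract a measure computing rectangle values. -/
lemma eval_aux (ρ : Measure (ℝ × ℝ)) (n : Measure ℝ)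
    (h : ρ.restrict (Set.univ ×ˢ Set.Ici (0:ℝ))
        = ((volume : Measure ℝ).prod n).restrict (Set.univ ×ˢ Set.Ici (0:ℝ))) :
    ∃ n' : Measure ℝ, ∀ A B : Set ℝ, MeasurableSet A → MeasurableSet B → B ⊆ Set.Ici 0 →
      ρ (A ×ˢ B) = volume A * n' B := by
  classical
  by_cases hf : AEMeasurable (fun x : ℝ => Measure.map (Prod.mk x) n) volume
  · refine ⟨n, fun A B hA hB hBs => ?_⟩
    set f : ℝ → Measure (ℝ × ℝ) := fun x => Measure.map (Prod.mk x) n with hfdef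
    have hg : Measurable hf.mk := hf.measurable_mk
    have hae : f =ᵐ[volume] hf.mk := hf.ae_eq_mk
    have hsub : A ×ˢ B ⊆ Set.univ ×ˢ Set.Ici (0:ℝ) :=
      Set.prod_mono (Set.subset_univ A) hBs
    have h1 : ρ (A ×ˢ B) = ((volume : Measure ℝ).prod n) (A ×ˢ B) := by
      have := congrArg (fun m : Measure (ℝ × ℝ) => m (A ×ˢ B)) h
      simpa [Measure.restrict_apply (hA.prod hB), Set.inter_eq_left.mpr hsub] using this
    have hbind : ((volume : Measure ℝ).prod n) (A ×ˢ B)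
        = ∫⁻ x, f x (A ×ˢ B) ∂(volume : Measure ℝ) := by
      rw [Measure.prod_def]
      show Measure.bind volume f (A ×ˢ B) = _
      unfold Measure.bind
      rw [Measure.map_congr hae]
      have := Measure.bind_apply (m := (volume : Measure ℝ)) (f := hf.mk)
        (hA.prod hB) hg.aemeasurable
      unfold Measure.bind at this
      rw [this]
      exact lintegral_congr_ae (hae.mono fun x hx => by simp only [hx])
    have heval : ∀ x : ℝ, f x (A ×ˢ B) = A.indicator (fun _ => n B) x := by
      intro x
      rw [hfdef]
      simp only []
      rw [Measure.map_apply measurable_prodMk_left (hA.prod hB),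
        Set.mk_preimage_prod_right_eq_if]
      by_cases hx : x ∈ A <;> simp [hx]
    rw [h1, hbind]
    simp_rw [heval]
    rw [lintegral_indicator hA, setLIntegral_const, mul_comm]
  · refine ⟨0, fun A B hA hB hBs => ?_⟩
    have hsub : A ×ˢ B ⊆ Set.univ ×ˢ Set.Ici (0:ℝ) :=
      Set.prod_mono (Set.subset_univ A) hBs
    have hprod : ((volume : Measure ℝ).prod n) = 0 := by
      rw [Measure.prod_def]
      unfold Measure.bind
      rw [Measure.map_of_not_aemeasurable hf]
      simp
    have h1 : ρ (A ×ˢ B) = ((volume : Measure ℝ).prod n) (A ×ˢ B) := by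
      have := congrArg (fun m : Measure (ℝ × ℝ) => m (A ×ˢ B)) h
      simpa [Measure.restrict_apply (hA.prod hB), Set.inter_eq_left.mpr hsub] using this
    simp [h1, hprod]

theorem stmt_11 (μ : Measure (ℝ × ℝ)) [IsLocallyFiniteMeasure μ]
    (hsplit : ∀ θ : ℝ, ∃ n : Measure ℝ,
      (Measure.map (planeRot θ) μ).restrict (Set.univ ×ˢ Set.Ici (0:ℝ))
        = ((volume : Measure ℝ).prod n).restrict (Set.univ ×ˢ Set.Ici (0:ℝ))) :
    ∃ c : ℝ≥0∞, μ = c • (volume : Measure (ℝ × ℝ)) := by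
  classical
  -- identify the three rotations we use
  have e0 : planeRot 0 = id := by funext p; simp [planeRot]
  have e1 : planeRot (Real.pi / 2) = fun p : ℝ × ℝ => (-p.2, p.1) := by
    funext p; simp [planeRot]
  have e2 : planeRot Real.pi = fun p : ℝ × ℝ => (-p.1, -p.2) := by
    funext p; simp [planeRot]
  -- θ = 0 : horizontal Lebesgue on the upper half-plane
  obtain ⟨n0m, h0⟩ := hsplit 0
  rw [e0, Measure.map_id] at h0
  obtain ⟨n0, P0⟩ := eval_aux μ n0m h0
  -- θ = π/2 : vertical Lebesgue on the right half-plane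
  obtain ⟨n1m, h1⟩ := hsplit (Real.pi / 2)
  rw [e1] at h1
  obtain ⟨n1, P1⟩ := eval_aux _ n1m h1
  have hT1 : Measurable (fun p : ℝ × ℝ => (-p.2, p.1)) :=
    (measurable_snd.neg).prodMk measurable_fst
  have P1' : ∀ B C : Set ℝ, MeasurableSet B → MeasurableSet C → B ⊆ Set.Ici 0 →
      μ (B ×ˢ C) = volume C * n1 B := by
    intro B C hB hC hBs
    have hCneg : MeasurableSet (Neg.neg ⁻¹' C) := measurable_neg hC
    have := P1 (Neg.neg ⁻¹' C) B hCneg hB hBs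
    rw [Measure.map_apply hT1 (hCneg.prod hB)] at this
    have hpre : (fun p : ℝ × ℝ => (-p.2, p.1)) ⁻¹' ((Neg.neg ⁻¹' C) ×ˢ B) = B ×ˢ C := by
      ext p; simp [Set.mem_prod, and_comm]
    rw [hpre] at this
    rw [this]
    congr 1
    exact Measure.measure_preimage_neg volume C
  -- θ = π : horizontal Lebesgue on the lower half-plane
  obtain ⟨n2m, h2⟩ := hsplit Real.pi
  rw [e2] at h2
  obtain ⟨n2, P2⟩ := eval_aux _ n2m h2
  have hT2 : Measurable (fun p : ℝ × ℝ => (-p.1, -p.2)) :=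
    (measurable_fst.neg).prodMk (measurable_snd.neg)
  have P2' : ∀ A B : Set ℝ, MeasurableSet A → MeasurableSet B → B ⊆ Set.Iic 0 →
      μ (A ×ˢ B) = volume A * n2 (Neg.neg ⁻¹' B) := by
    intro A B hA hB hBs
    have hAneg : MeasurableSet (Neg.neg ⁻¹' A) := measurable_neg hA
    have hBneg : MeasurableSet (Neg.neg ⁻¹' B) := measurable_neg hB
    have hBneg_sub : Neg.neg ⁻¹' B ⊆ Set.Ici (0:ℝ) := by
      intro x hx
      have : -x ≤ 0 := hBs hx
      simpa using neg_nonpos.mp this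
    have := P2 (Neg.neg ⁻¹' A) (Neg.neg ⁻¹' B) hAneg hBneg hBneg_sub
    rw [Measure.map_apply hT2 (hAneg.prod hBneg)] at this
    have hpre : (fun p : ℝ × ℝ => (-p.1, -p.2)) ⁻¹' ((Neg.neg ⁻¹' A) ×ˢ (Neg.neg ⁻¹' B))
        = A ×ˢ B := by
      ext p; simp [Set.mem_prod]
    rw [hpre] at this
    rw [this]
    congr 1
    exact Measure.measure_preimage_neg volume A
  -- the constant
  set c : ℝ≥0∞ := n1 (Set.Icc 0 1) with hc_def
  have hIcc : volume (Set.Icc (0:ℝ) 1) = 1 := by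
    rw [Real.volume_Icc]; norm_num
  have hIcc_sub : Set.Icc (0:ℝ) 1 ⊆ Set.Ici 0 := fun x hx => hx.1
  have hIccM : MeasurableSet (Set.Icc (0:ℝ) 1) := measurableSet_Icc
  -- the strip identity: μ (Icc 0 1 ×ˢ C) = volume C * c
  have hstrip : ∀ C : Set ℝ, MeasurableSet C → μ (Set.Icc 0 1 ×ˢ C) = volume C * c :=
    fun C hC => P1' _ C hIccM hC hIcc_sub
  -- n0 on the upper half-line
  have hup : ∀ t : Set ℝ, MeasurableSet t → t ⊆ Set.Ici 0 → n0 t = c * volume t := by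
    intro t ht hts
    have h1 := P0 (Set.Icc 0 1) t hIccM ht hts
    have h2 := hstrip t ht
    rw [h1, hIcc, one_mul] at h2
    rw [h2, mul_comm]
  -- n2 on the lower half-line
  have hdown : ∀ t : Set ℝ, MeasurableSet t → t ⊆ Set.Iic 0 →
      n2 (Neg.neg ⁻¹' t) = c * volume t := by
    intro t ht hts
    have h1 := P2' (Set.Icc 0 1) t hIccM ht hts
    have h2 := hstrip t ht
    rw [h1, hIcc, one_mul] at h2
    rw [h2, mul_comm]
  -- c is finite
  have hc_fin : c ≠ ∞ := by
    have h1 : μ (Set.Icc 0 1 ×ˢ Set.Icc (0:ℝ) 1) = c := by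
      rw [hstrip _ hIccM, hIcc, one_mul]
    rw [← h1]
    exact ((isCompact_Icc.prod isCompact_Icc).measure_lt_top).ne
  -- rectangle formula for μ
  have key : ∀ s t : Set ℝ, MeasurableSet s → MeasurableSet t →
      μ (s ×ˢ t) = (c • (volume : Measure ℝ)) s * volume t := by
    intro s t hs ht
    have htu : t = (t ∩ Set.Ici 0) ∪ (t ∩ Set.Iio 0) := by
      rw [← Set.inter_union_distrib_left, Set.union_comm, Set.Iio_union_Ici, Set.inter_univ]
    have hdisj : Disjoint (s ×ˢ (t ∩ Set.Ici 0)) (s ×ˢ (t ∩ Set.Iio 0)) := by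
      rw [Set.disjoint_left]
      rintro ⟨x, y⟩ ⟨-, -, hy1⟩ ⟨-, -, hy2⟩
      exact absurd (show y < 0 from hy2) (not_lt.mpr (show (0:ℝ) ≤ y from hy1))
    have hm1 : MeasurableSet (s ×ˢ (t ∩ Set.Iio 0)) :=
      hs.prod (ht.inter measurableSet_Iio)
    have hsum : μ (s ×ˢ t) = μ (s ×ˢ (t ∩ Set.Ici 0)) + μ (s ×ˢ (t ∩ Set.Iio 0)) := by
      conv_lhs => rw [htu]
      rw [Set.prod_union]
      exact measure_union hdisj hm1
    have hA := P0 s (t ∩ Set.Ici 0) hs (ht.inter measurableSet_Ici)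
      (Set.inter_subset_right)
    have hB := P2' s (t ∩ Set.Iio 0) hs (ht.inter measurableSet_Iio)
      (Set.inter_subset_right.trans Set.Iio_subset_Iic_self)
    rw [hup _ (ht.inter measurableSet_Ici) Set.inter_subset_right] at hA
    rw [hdown _ (ht.inter measurableSet_Iio)
      (Set.inter_subset_right.trans Set.Iio_subset_Iic_self)] at hB
    have hvt : volume (t ∩ Set.Ici 0) + volume (t ∩ Set.Iio 0) = volume t := by
      have := measure_inter_add_diff (μ := (volume : Measure ℝ)) t
        (measurableSet_Ici (a := (0:ℝ)))
      rw [Set.diff_eq, Set.compl_Ici] at this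
      exact this
    rw [hsum, hA, hB, Measure.smul_apply, smul_eq_mul, ← hvt]
    ring
  -- conclude via uniqueness of product measures
  obtain ⟨c', hc'⟩ : ∃ c' : NNReal, c = (c' : ℝ≥0∞) :=
    ⟨c.toNNReal, (ENNReal.coe_toNNReal hc_fin).symm⟩
  have hsmul_eq : (c' • (volume : Measure ℝ)) = c • (volume : Measure ℝ) := by
    rw [ENNReal.smul_def, hc']
  haveI : SigmaFinite (c • (volume : Measure ℝ)) :=
    hsmul_eq ▸ (inferInstance : SigmaFinite (c' • (volume : Measure ℝ)))
  have hμeq : (c • (volume : Measure ℝ)).prod (volume : Measure ℝ) = μ :=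
    Measure.prod_eq fun s t hs ht => key s t hs ht
  have hfinal : (c • (volume : Measure ℝ)).prod (volume : Measure ℝ)
      = c • ((volume : Measure ℝ).prod (volume : Measure ℝ)) :=
    Measure.prod_eq fun s t hs ht => by
      rw [Measure.smul_apply, Measure.prod_prod, Measure.smul_apply, smul_eq_mul,
        smul_eq_mul, mul_assoc]
  refine ⟨c, ?_⟩
  rw [← hμeq, hfinal]
  rfl
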